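/- arXiv:2502.06754 — 2 statements merged into one kernel-verified Lean document; each statement's English description precedes it below -/
import Mathlib

section
/- Let N be a Poisson random variable with mean m > 0, and let (X_i)_{i ∈ ℕ} be i.i.d. nonnegative real random variables independent of N, with q := E[exp(-X_0)]. Set S := Σ_{i < N} X_i. Then E[exp(-S) · 1_{N even}] = e^{-m} cosh(m q), and consequently the conditional expectation given that N is even satisfies E[exp(-S) | N is even] = cosh(m q)/cosh(m). -/
open MeasureTheory ProbabilityTheory

/-- **Laplace transform of a compound Poisson sum on the even-parity event.**
If `N` is Poisson with mean `m > 0` and `(X i)` are i.i.d. nonnegative random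
variables independent of `N`, with `q = E[exp(-X 0)]`, then for
`S = ∑_{i < N} X i` one has `E[exp(-S) 1_{N even}] = e^{-m} cosh (m q)` and
`E[exp(-S) | N even] = cosh (m q) / cosh m`. -/
theorem compound_poisson_laplace_even
    {Ω : Type*} [MeasurableSpace Ω] (μ : Measure Ω) [IsProbabilityMeasure μ]
    (m : ℝ) (hm : 0 < m)
    (N : Ω → ℕ) (hN : Measurable N)
    (hlaw : ∀ n : ℕ, μ {ω | N ω = n} =
      ENNReal.ofReal (Real.exp (-m) * m ^ n / n.factorial))
    (X : ℕ → Ω → ℝ) (hX : ∀ i, Measurable (X i))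
    (hpos : ∀ i, ∀ ω, 0 ≤ X i ω)
    (hident : ∀ i, Measure.map (X i) μ = Measure.map (X 0) μ)
    (hiid : iIndepFun X μ)
    (hindep : IndepFun N (fun ω i => X i ω) μ)
    (q : ℝ) (hq : q = ∫ ω, Real.exp (-(X 0 ω)) ∂μ) :
    (∫ ω in {ω | Even (N ω)},
        Real.exp (-(∑ i ∈ Finset.range (N ω), X i ω)) ∂μ)
      = Real.exp (-m) * Real.cosh (m * q) ∧
    (∫ ω in {ω | Even (N ω)},
        Real.exp (-(∑ i ∈ Finset.range (N ω), X i ω)) ∂μ)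
        / (μ {ω | Even (N ω)}).toReal
      = Real.cosh (m * q) / Real.cosh m := by
  classical
  set f : Ω → ℝ := fun ω => Real.exp (-(∑ i ∈ Finset.range (N ω), X i ω)) with hfdef
  -- measurability of f
  have hsumMeas : Measurable fun ω => ∑ i ∈ Finset.range (N ω), X i ω := by
    have h1 : Measurable fun p : Ω × ℕ => ∑ i ∈ Finset.range p.2, X i p.1 :=
      measurable_from_prod_countable_left fun n =>
        show Measurable fun x : Ω => ∑ i ∈ Finset.range n, X i x from
          Finset.measurable_sum _ (fun i _ => hX i)
    exact h1.comp (measurable_id.prodMk hN)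
  have hfmeas : Measurable f := Real.measurable_exp.comp hsumMeas.neg
  have hfbound : ∀ ω, ‖f ω‖ ≤ 1 := by
    intro ω
    rw [Real.norm_eq_abs, abs_of_pos (Real.exp_pos _)]
    calc Real.exp (-(∑ i ∈ Finset.range (N ω), X i ω)) ≤ Real.exp 0 := by
          apply Real.exp_le_exp.mpr
          simp only [neg_nonpos, Left.neg_nonpos_iff]
          exact Finset.sum_nonneg fun i _ => hpos i ω
      _ = 1 := Real.exp_zero
  have hfint : Integrable f μ :=
    Integrable.mono' (integrable_const 1) hfmeas.aestronglyMeasurable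
      (Filter.Eventually.of_forall hfbound)
  -- the sets
  set s : ℕ → Set Ω := fun k => {ω | N ω = 2 * k} with hsdef
  have hmeas_s : ∀ k, MeasurableSet (s k) := fun k => hN (measurableSet_singleton (2 * k))
  have hunion : {ω | Even (N ω)} = ⋃ k, s k := by
    ext ω
    simp only [Set.mem_setOf_eq, Set.mem_iUnion, hsdef]
    constructor
    · rintro ⟨r, hr⟩; exact ⟨r, by omega⟩
    · rintro ⟨k, hk⟩; exact ⟨k, by omega⟩
  have hdisj : Pairwise (Function.onFun Disjoint s) := by
    intro i j hij
    simp only [Function.onFun, Set.disjoint_left, hsdef, Set.mem_setOf_eq]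
    intro ω h1 h2
    omega
  -- exp-compositions of the X's
  have hYmeas : ∀ i, Measurable fun ω => Real.exp (-(X i ω)) :=
    fun i => Real.measurable_exp.comp (hX i).neg
  have hYindep : iIndepFun
      (fun i ω => Real.exp (-(X i ω))) μ :=
    hiid.comp (fun _ x => Real.exp (-x))
      (fun _ => Real.measurable_exp.comp measurable_neg)
  have hYint : ∀ i, ∫ ω, Real.exp (-(X i ω)) ∂μ = q := by
    intro i
    have h0 : ∀ j, ∫ ω, Real.exp (-(X j ω)) ∂μ
        = ∫ x, Real.exp (-x) ∂(Measure.map (X j) μ) :=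
      fun j => (integral_map (hX j).aemeasurable
        (Real.measurable_exp.comp measurable_neg).aestronglyMeasurable).symm
    rw [hq, h0 i, h0 0, hident i]
  -- product formula
  have hC' : ∀ n : ℕ, ∫ ω, ∏ i ∈ Finset.range n, Real.exp (-(X i ω)) ∂μ = q ^ n := by
    intro n
    induction n with
    | zero => simp
    | succ n ih =>
      have hPmeas : Measurable (∏ j ∈ Finset.range n, fun ω => Real.exp (-(X j ω))) := by
        rw [Finset.prod_fn]
        exact Finset.measurable_prod _ fun i _ => hYmeas i
      have hstep := (hYindep.indepFun_prod_range_succ hYmeas n).integral_mul_eq_mul_integral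
        hPmeas.aestronglyMeasurable
        (hYmeas n).aestronglyMeasurable
      calc ∫ ω, ∏ i ∈ Finset.range (n + 1), Real.exp (-(X i ω)) ∂μ
          = ∫ ω, ((∏ j ∈ Finset.range n, fun ω' => Real.exp (-(X j ω'))) *
              fun ω' => Real.exp (-(X n ω'))) ω ∂μ := by
            apply integral_congr_ae
            filter_upwards with ω
            simp [Finset.prod_range_succ, Finset.prod_apply]
        _ = (∫ ω, (∏ j ∈ Finset.range n, fun ω' => Real.exp (-(X j ω'))) ω ∂μ) *
              ∫ ω, Real.exp (-(X n ω)) ∂μ := hstep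
        _ = q ^ n * q := by
            rw [hYint n]
            congr 1
            calc ∫ ω, (∏ j ∈ Finset.range n, fun ω' => Real.exp (-(X j ω'))) ω ∂μ
                = ∫ ω, ∏ i ∈ Finset.range n, Real.exp (-(X i ω)) ∂μ := by
                  apply integral_congr_ae
                  filter_upwards with ω
                  simp [Finset.prod_apply]
              _ = q ^ n := ih
        _ = q ^ (n + 1) := by ring
  have hC : ∀ n : ℕ, ∫ ω, Real.exp (-(∑ i ∈ Finset.range n, X i ω)) ∂μ = q ^ n := by
    intro n
    rw [← hC' n]
    apply integral_congr_ae
    filter_upwards with ω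
    rw [← Finset.sum_neg_distrib, Real.exp_sum]
  -- value of the integral over each piece
  have key : ∀ n : ℕ, ∫ ω in {ω | N ω = n}, f ω ∂μ
      = (Real.exp (-m) * m ^ n / n.factorial) * q ^ n := by
    intro n
    have hsetmeas : MeasurableSet {ω | N ω = n} := hN (measurableSet_singleton n)
    have hA : ∫ ω in {ω | N ω = n}, f ω ∂μ
        = ∫ ω in {ω | N ω = n}, Real.exp (-(∑ i ∈ Finset.range n, X i ω)) ∂μ := by
      apply setIntegral_congr_fun hsetmeas
      intro ω hω
      simp only [Set.mem_setOf_eq] at hω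
      simp [hfdef, hω]
    have h2 : Measurable fun x : ℕ → ℝ => Real.exp (-(∑ i ∈ Finset.range n, x i)) := by
      apply Real.measurable_exp.comp
      apply Measurable.neg
      exact Finset.measurable_sum _ fun i _ => measurable_pi_apply i
    have h1 : Measurable (Set.indicator ({n} : Set ℕ) (fun _ => (1 : ℝ))) :=
      measurable_const.indicator (measurableSet_singleton n)
    have hind : IndepFun
        ((Set.indicator ({n} : Set ℕ) (fun _ => (1 : ℝ))) ∘ N)
        ((fun x : ℕ → ℝ => Real.exp (-(∑ i ∈ Finset.range n, x i))) ∘ (fun ω i => X i ω))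
        μ := hindep.comp h1 h2
    have hmul := hind.integral_mul_eq_mul_integral
      ((h1.comp hN).aestronglyMeasurable)
      ((h2.comp (measurable_pi_lambda _ fun i => hX i)).aestronglyMeasurable)
    have hB1 : ∫ ω in {ω | N ω = n}, Real.exp (-(∑ i ∈ Finset.range n, X i ω)) ∂μ
        = ∫ ω, ((Set.indicator ({n} : Set ℕ) (fun _ => (1 : ℝ))) ∘ N) ω *
            Real.exp (-(∑ i ∈ Finset.range n, X i ω)) ∂μ := by
      rw [← integral_indicator hsetmeas]
      apply integral_congr_ae
      filter_upwards with ω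
      by_cases hω : N ω = n
      · simp [Set.indicator, hω]
      · simp [Set.indicator, hω]
    have hB2 : ∫ ω, ((Set.indicator ({n} : Set ℕ) (fun _ => (1 : ℝ))) ∘ N) ω ∂μ
        = (μ {ω | N ω = n}).toReal := by
      have : ∀ ω, ((Set.indicator ({n} : Set ℕ) (fun _ => (1 : ℝ))) ∘ N) ω
          = Set.indicator {ω | N ω = n} (fun _ => (1 : ℝ)) ω := by
        intro ω
        by_cases hω : N ω = n
        · simp [Set.indicator, hω]
        · simp [Set.indicator, hω]
      simp_rw [this]
      rw [integral_indicator_const (1 : ℝ) hsetmeas]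
      simp [Measure.real]
    calc ∫ ω in {ω | N ω = n}, f ω ∂μ
        = ∫ ω, ((Set.indicator ({n} : Set ℕ) (fun _ => (1 : ℝ))) ∘ N) ω *
            ((fun x : ℕ → ℝ => Real.exp (-(∑ i ∈ Finset.range n, x i)))
              ∘ (fun ω i => X i ω)) ω ∂μ := by rw [hA, hB1]; rfl
      _ = (∫ ω, ((Set.indicator ({n} : Set ℕ) (fun _ => (1 : ℝ))) ∘ N) ω ∂μ) *
            ∫ ω, ((fun x : ℕ → ℝ => Real.exp (-(∑ i ∈ Finset.range n, x i)))
              ∘ (fun ω i => X i ω)) ω ∂μ := hmul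
      _ = (μ {ω | N ω = n}).toReal * q ^ n := by rw [hB2]; congr 1; exact hC n
      _ = (Real.exp (-m) * m ^ n / n.factorial) * q ^ n := by
          rw [hlaw n, ENNReal.toReal_ofReal]
          positivity
  -- decompose the integral over the even event
  have hdecomp : ∫ ω in {ω | Even (N ω)}, f ω ∂μ = ∑' k, ∫ ω in s k, f ω ∂μ := by
    rw [hunion]
    exact integral_iUnion hmeas_s hdisj hfint.integrableOn
  have hterm : ∀ k : ℕ, ∫ ω in s k, f ω ∂μ
      = Real.exp (-m) * ((m * q) ^ (2 * k) / ((2 * k).factorial : ℝ)) := by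
    intro k
    rw [key (2 * k), mul_pow]
    ring
  have hfirst : ∫ ω in {ω | Even (N ω)}, f ω ∂μ = Real.exp (-m) * Real.cosh (m * q) := by
    rw [hdecomp]
    calc ∑' k, ∫ ω in s k, f ω ∂μ
        = ∑' k, Real.exp (-m) * ((m * q) ^ (2 * k) / ((2 * k).factorial : ℝ)) :=
          tsum_congr hterm
      _ = Real.exp (-m) * ∑' k, (m * q) ^ (2 * k) / ((2 * k).factorial : ℝ) :=
          tsum_mul_left
      _ = Real.exp (-m) * Real.cosh (m * q) := by rw [Real.cosh_eq_tsum]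
  -- measure of the even event
  have hsummable : Summable fun k : ℕ => m ^ (2 * k) / ((2 * k).factorial : ℝ) :=
    (Real.hasSum_cosh m).summable
  have hmeasEven : μ {ω | Even (N ω)} = ENNReal.ofReal (Real.exp (-m) * Real.cosh m) := by
    rw [hunion, measure_iUnion hdisj hmeas_s]
    have hlaw' : ∀ k : ℕ, μ (s k)
        = ENNReal.ofReal (Real.exp (-m) * (m ^ (2 * k) / ((2 * k).factorial : ℝ))) := by
      intro k
      rw [hsdef]
      simp only
      rw [hlaw (2 * k)]
      congr 1
      ring
    simp_rw [hlaw']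
    rw [← ENNReal.ofReal_tsum_of_nonneg (fun k => by positivity) (hsummable.mul_left _)]
    congr 1
    rw [tsum_mul_left, Real.cosh_eq_tsum]
  have hcoshpos : (0 : ℝ) < Real.cosh m := Real.cosh_pos m
  have htoReal : (μ {ω | Even (N ω)}).toReal = Real.exp (-m) * Real.cosh m := by
    rw [hmeasEven, ENNReal.toReal_ofReal]
    positivity
  refine ⟨hfirst, ?_⟩
  rw [hfirst, htoReal, mul_div_mul_left _ _ (Real.exp_ne_zero (-m))]
end

section
/- Let μ be the centered Gaussian measure on ℝ with variance v > 0, let k ≥ 0, and define F(φ) := ∫ exp(-k (x + φ)²) dμ(x) for φ ∈ ℝ. Then for all φ₁, φ₂ ∈ ℝ: F(φ₁ + φ₂) + F(φ₁ - φ₂) = 2 · (F(φ₁) F(φ₂) / F(0)) · cosh( 2 k φ₁ φ₂ / (1 + 2 k v) ), and F(φ₁ + φ₂) - F(φ₁ - φ₂) = -2 · (F(φ₁) F(φ₂) / F(0)) · sinh( 2 k φ₁ φ₂ / (1 + 2 k v) ). -/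
open MeasureTheory ProbabilityTheory
open scoped Real

lemma F_explicit (v : NNReal) (hv : 0 < v) (k : ℝ) (hk : 0 ≤ k) (φ : ℝ) :
    ∫ x, Real.exp (-k * (x + φ) ^ 2) ∂(gaussianReal 0 v)
      = Real.exp (-k * φ ^ 2 / (1 + 2 * k * v)) / Real.sqrt (1 + 2 * k * v) := by
  have hvr : (0:ℝ) < (v:ℝ) := hv
  set a : ℝ := 1 + 2 * k * v with ha_def
  have ha : 0 < a := by positivity
  set b : ℝ := k + 1 / (2 * v) with hb_def
  have hb : 0 < b := by positivity
  have hab : a = 2 * v * b := by rw [ha_def, hb_def]; field_simp; ring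
  rw [gaussianReal_of_var_ne_zero _ hv.ne']
  set f : ℝ → NNReal := fun x => Real.toNNReal (gaussianPDFReal 0 v x) with hf_def
  have hpdf : gaussianPDF 0 v = fun x => ((f x : NNReal) : ENNReal) := rfl
  rw [hpdf, integral_withDensity_eq_integral_smul
    ((measurable_gaussianPDFReal 0 v).real_toNNReal)]
  have hint : ∀ x : ℝ, f x •
      Real.exp (-k * (x + φ) ^ 2)
      = (√(2 * π * v))⁻¹ * (Real.exp (-k * φ^2 / a) * Real.exp (-b * (x + k * φ / b) ^ 2)) := by
    intro x
    rw [NNReal.smul_def, smul_eq_mul, hf_def,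
      Real.coe_toNNReal _ (gaussianPDFReal_nonneg 0 v x)]
    rw [gaussianPDFReal, mul_assoc, ← Real.exp_add, ← Real.exp_add]
    congr 2
    rw [ha_def, hb_def]
    have h1 : (0:ℝ) < 1 + 2*k*(v:ℝ) := by positivity
    have h2 : (0:ℝ) < k + 1/(2*(v:ℝ)) := by positivity
    field_simp [hvr.ne', h1.ne', h2.ne']
    ring
  change ∫ x, f x • Real.exp (-k * (x + φ) ^ 2) = _
  simp_rw [hint]
  rw [integral_const_mul, integral_const_mul,
    integral_add_right_eq_self (fun y => Real.exp (-b * y ^ 2)) (k * φ / b),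
    integral_gaussian]
  rw [div_eq_mul_inv, mul_comm, mul_assoc]
  congr 1
  rw [← Real.sqrt_inv, ← Real.sqrt_inv, ← Real.sqrt_mul (by positivity)]
  congr 1
  rw [hab, hb_def]
  have h2 : (0:ℝ) < k + 1/(2*(v:ℝ)) := by positivity
  field_simp [hvr.ne', h2.ne']

/-- **cosh/sinh factorization of the Gaussian exponential functional.**
Let `μ` be the centered Gaussian measure on `ℝ` with variance `v > 0`, `k ≥ 0`,
and `F φ = ∫ exp (-k (x + φ)²) dμ(x)`. Then for all `φ₁ φ₂`,
`F (φ₁ + φ₂) + F (φ₁ - φ₂) = 2 (F φ₁ F φ₂ / F 0) cosh (2 k φ₁ φ₂ / (1 + 2kv))`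
and
`F (φ₁ + φ₂) - F (φ₁ - φ₂) = -2 (F φ₁ F φ₂ / F 0) sinh (2 k φ₁ φ₂ / (1 + 2kv))`. -/
theorem gaussian_exp_functional_cosh_sinh
    (v : NNReal) (hv : 0 < v) (k : ℝ) (hk : 0 ≤ k)
    (F : ℝ → ℝ)
    (hF : ∀ φ : ℝ, F φ = ∫ x, Real.exp (-k * (x + φ) ^ 2) ∂(gaussianReal 0 v)) :
    ∀ φ₁ φ₂ : ℝ,
      F (φ₁ + φ₂) + F (φ₁ - φ₂)
        = 2 * (F φ₁ * F φ₂ / F 0)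
          * Real.cosh (2 * k * φ₁ * φ₂ / (1 + 2 * k * v)) ∧
      F (φ₁ + φ₂) - F (φ₁ - φ₂)
        = -2 * (F φ₁ * F φ₂ / F 0)
          * Real.sinh (2 * k * φ₁ * φ₂ / (1 + 2 * k * v)) := by
  intro φ₁ φ₂
  have hvr : (0:ℝ) < (v:ℝ) := hv
  have ha : (0:ℝ) < 1 + 2 * k * (v:ℝ) := by positivity
  have hs : (0:ℝ) < Real.sqrt (1 + 2 * k * (v:ℝ)) := Real.sqrt_pos.mpr ha
  have hFe : ∀ φ : ℝ, F φ
      = Real.exp (-k * φ ^ 2 / (1 + 2 * k * (v:ℝ))) / Real.sqrt (1 + 2 * k * (v:ℝ)) :=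
    fun φ => by rw [hF φ, F_explicit v hv k hk]
  set a := 1 + 2 * k * (v:ℝ) with hadef
  have e1 : -k * (φ₁ + φ₂) ^ 2 / a
      = (-k * φ₁ ^ 2 / a + -k * φ₂ ^ 2 / a) + -(2 * k * φ₁ * φ₂ / a) := by
    field_simp
    ring
  have e2 : -k * (φ₁ - φ₂) ^ 2 / a
      = (-k * φ₁ ^ 2 / a + -k * φ₂ ^ 2 / a) + (2 * k * φ₁ * φ₂ / a) := by
    field_simp
    ring
  have e0 : -k * (0:ℝ) ^ 2 / a = 0 := by simp
  constructor
  · simp only [hFe, e1, e2, e0, Real.exp_add, Real.exp_zero, Real.cosh_eq]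
    have hs2 : Real.sqrt a ^ 2 = a := Real.sq_sqrt ha.le
    set s := Real.sqrt a with hsdef
    rw [← sub_eq_zero]
    field_simp
    ring
  · simp only [hFe, e1, e2, e0, Real.exp_add, Real.exp_zero, Real.sinh_eq]
    have hs2 : Real.sqrt a ^ 2 = a := Real.sq_sqrt ha.le
    set s := Real.sqrt a with hsdef
    rw [← sub_eq_zero]
    field_simp
    ring
end
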